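/- Let φ: ℝⁿ → (-∞,∞] be convex, lower semicontinuous, coercive (φ(x) ≥ a|x| + b with a > 0), and bounded above on some ball B̄_ε(0). For u ∈ ℝⁿ consider the curve γ_u(s) = (su, log(1/s)) for s ∈ (0,∞). Then there exists s₀ ∈ (0,∞) such that γ_u(s₀) ∈ ∂epi(φ), γ_u(s) ∈ int(epi(φ)) for all s < s₀, and γ_u(s) ∉ epi(φ) for all s > s₀; moreover s₀ is unique. (Assume additionally φ(x) < min φ + 1/2 on B̄_ε(0).) -/

import Mathlib

noncomputable section

/-- Convexity for `(-∞,∞]`-valued functions. -/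
def ConvexEReal {n : ℕ} (φ : EuclideanSpace ℝ (Fin n) → EReal) : Prop :=
  ∀ x y : EuclideanSpace ℝ (Fin n), ∀ a b : ℝ, 0 ≤ a → 0 ≤ b → a + b = 1 →
    φ (a • x + b • y) ≤ (a : EReal) * φ x + (b : EReal) * φ y

/-- for `φ` convex, lsc, coercive, attaining its minimum `m`, with
`φ < m + 1/2` on the ball `B̄_ε(0)`, and any `u ∈ ℝⁿ`, there is a unique `s₀ > 0` such that
the curve `γ_u(s) = (su, log(1/s))` is in the interior of `epi(φ)` for `s < s₀`, on the
boundary at `s₀`, and outside `epi(φ)` for `s > s₀`. -/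
theorem statement8 (n : ℕ) (φ : EuclideanSpace ℝ (Fin n) → EReal)
    (hbot : ∀ x, φ x ≠ ⊥) (hconv : ConvexEReal φ) (hlsc : LowerSemicontinuous φ)
    (a b : ℝ) (ha : 0 < a) (hcoer : ∀ x, ((a * ‖x‖ + b : ℝ) : EReal) ≤ φ x)
    (m ε : ℝ) (hε : 0 < ε)
    (hmin : ∀ x, (m : EReal) ≤ φ x) (hattain : ∃ x, φ x = (m : EReal))
    (hball : ∀ x, ‖x‖ ≤ ε → φ x < (m : EReal) + ((1 / 2 : ℝ) : EReal))
    (u : EuclideanSpace ℝ (Fin n)) :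
    ∃! s₀ : ℝ, 0 < s₀ ∧
      (s₀ • u, Real.log (1 / s₀)) ∈
        frontier {p : EuclideanSpace ℝ (Fin n) × ℝ | φ p.1 ≤ (p.2 : EReal)} ∧
      (∀ s : ℝ, 0 < s → s < s₀ → (s • u, Real.log (1 / s)) ∈
        interior {p : EuclideanSpace ℝ (Fin n) × ℝ | φ p.1 ≤ (p.2 : EReal)}) ∧
      (∀ s : ℝ, s₀ < s → (s • u, Real.log (1 / s)) ∉
        {p : EuclideanSpace ℝ (Fin n) × ℝ | φ p.1 ≤ (p.2 : EReal)}) := by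
  classical
  set Epi : Set (EuclideanSpace ℝ (Fin n) × ℝ) :=
    {p : EuclideanSpace ℝ (Fin n) × ℝ | φ p.1 ≤ (p.2 : EReal)} with hEpi
  -- Epi is closed
  have hclosed : IsClosed Epi := by
    have h1 : IsClosed {p : EuclideanSpace ℝ (Fin n) × EReal | φ p.1 ≤ p.2} :=
      hlsc.isClosed_epigraph
    have h2 : Epi = (fun p : EuclideanSpace ℝ (Fin n) × ℝ => (p.1, (p.2 : EReal))) ⁻¹'
        {p : EuclideanSpace ℝ (Fin n) × EReal | φ p.1 ≤ p.2} := rfl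
    rw [h2]
    exact h1.preimage (continuous_fst.prodMk (continuous_coe_real_ereal.comp continuous_snd))
  -- Epi is convex
  have hconvE : Convex ℝ Epi := by
    rintro ⟨x, s⟩ hx ⟨y, t⟩ hy c d hc hd hcd
    simp only [hEpi, Set.mem_setOf_eq] at hx hy ⊢
    have h1 : φ (c • x + d • y) ≤ (c : EReal) * φ x + (d : EReal) * φ y :=
      hconv x y c d hc hd hcd
    have h2 : (c : EReal) * φ x ≤ (c : EReal) * (s : EReal) :=
      mul_le_mul_of_nonneg_left hx (by exact_mod_cast hc)
    have h3 : (d : EReal) * φ y ≤ (d : EReal) * (t : EReal) :=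
      mul_le_mul_of_nonneg_left hy (by exact_mod_cast hd)
    calc φ (c • x + d • y) ≤ (c : EReal) * φ x + (d : EReal) * φ y := h1
      _ ≤ (c : EReal) * (s : EReal) + (d : EReal) * (t : EReal) := add_le_add h2 h3
      _ = ((c * s + d * t : ℝ) : EReal) := by norm_cast
  -- an open box inside Epi
  have hO : (Metric.ball (0 : EuclideanSpace ℝ (Fin n)) ε) ×ˢ (Set.Ioi (m + 1/2)) ⊆
      interior Epi := by
    apply interior_maximal
    · rintro ⟨x, τ⟩ ⟨hx, hτ⟩
      simp only [Metric.mem_ball, dist_zero_right] at hx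
      simp only [Set.mem_Ioi] at hτ
      have h1 : φ x < ((m + 1/2 : ℝ) : EReal) := by
        have := hball x hx.le
        rwa [← EReal.coe_add] at this
      have h2 : ((m + 1/2 : ℝ) : EReal) ≤ (τ : EReal) := by exact_mod_cast hτ.le
      exact (lt_of_lt_of_le h1 h2).le
    · exact Metric.isOpen_ball.prod isOpen_Ioi
  -- the set S of "times" on the curve inside Epi, parametrized by t = log(1/s)
  set γ : ℝ → EuclideanSpace ℝ (Fin n) × ℝ := fun t => (Real.exp (-t) • u, t) with hγ
  have hγc : Continuous γ := by
    exact ((Real.continuous_exp.comp continuous_neg).smul continuous_const).prodMk continuous_id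
  set S : Set ℝ := γ ⁻¹' Epi with hS
  have hSclosed : IsClosed S := hclosed.preimage hγc
  have hSbdd : BddBelow S := by
    refine ⟨m, fun t ht => ?_⟩
    have h1 : (m : EReal) ≤ (t : EReal) := le_trans (hmin _) ht
    exact_mod_cast h1
  have hSne : S.Nonempty := by
    refine ⟨max (m + 1/2) (Real.log (‖u‖ / ε)), ?_⟩
    set T := max (m + 1/2) (Real.log (‖u‖ / ε)) with hT
    have hnorm : ‖Real.exp (-T) • u‖ ≤ ε := by
      rw [norm_smul, Real.norm_eq_abs, abs_of_pos (Real.exp_pos _)]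
      rcases eq_or_lt_of_le (norm_nonneg u) with h | h
      · rw [← h, mul_zero]; exact hε.le
      · have h1 : Real.log (‖u‖ / ε) ≤ T := le_max_right _ _
        have h2 : Real.exp (-T) ≤ Real.exp (-(Real.log (‖u‖ / ε))) :=
          Real.exp_le_exp.2 (neg_le_neg h1)
        have h3 : Real.exp (-(Real.log (‖u‖ / ε))) = ε / ‖u‖ := by
          rw [Real.exp_neg, Real.exp_log (div_pos h hε), inv_div]
        calc Real.exp (-T) * ‖u‖ ≤ (ε / ‖u‖) * ‖u‖ := by
              rw [← h3]; exact mul_le_mul_of_nonneg_right h2 (norm_nonneg u)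
          _ = ε := by field_simp
    have h1 : φ (Real.exp (-T) • u) < ((m + 1/2 : ℝ) : EReal) := by
      have := hball _ hnorm
      rwa [← EReal.coe_add] at this
    have h2 : ((m + 1/2 : ℝ) : EReal) ≤ (T : EReal) := by
      exact_mod_cast le_max_left (m + 1/2) (Real.log (‖u‖ / ε))
    exact (lt_of_lt_of_le h1 h2).le
  set t₀ : ℝ := sInf S with ht₀
  have ht₀S : t₀ ∈ S := hSclosed.csInf_mem hSne hSbdd
  have ht₀m : m ≤ t₀ := by
    have h1 : (m : EReal) ≤ (t₀ : EReal) := le_trans (hmin _) ht₀S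
    exact_mod_cast h1
  -- key interior lemma
  have key : ∀ t₁ ∈ S, ∀ δ : ℝ, 0 < δ → γ (t₁ + δ) ∈ interior Epi := by
    intro t₁ ht₁ δ hδ
    have ht₁m : m ≤ t₁ := by
      have h1 : (m : EReal) ≤ (t₁ : EReal) := le_trans (hmin _) ht₁
      exact_mod_cast h1
    set l : ℝ := Real.exp (-δ) with hl
    have hl0 : 0 < l := Real.exp_pos _
    have hlδ : 1 - δ < l := by
      have := Real.add_one_lt_exp (x := -δ) (by linarith)
      linarith
    have hl1 : l < 1 := by
      rw [hl, ← Real.exp_zero]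
      exact Real.exp_lt_exp.2 (by linarith)
    have hml : (0:ℝ) < 1 - l := by linarith
    set q₂ : ℝ := (t₁ + δ - l * t₁) / (1 - l) with hq₂def
    have hq₂ : m + 1/2 < q₂ := by
      rw [lt_div_iff₀ hml]
      nlinarith
    have hq : ((0 : EuclideanSpace ℝ (Fin n)), q₂) ∈ interior Epi :=
      hO ⟨Metric.mem_ball_self hε, hq₂⟩
    have hp : γ t₁ ∈ Epi := ht₁
    have hcombo := hconvE.combo_interior_self_mem_interior hq hp hml hl0.le (by ring)
    have hpt : (1 - l) • ((0 : EuclideanSpace ℝ (Fin n)), q₂) + l • γ t₁ = γ (t₁ + δ) := by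
      apply Prod.ext
      · show (1 - l) • (0 : EuclideanSpace ℝ (Fin n)) + l • (Real.exp (-t₁) • u)
          = Real.exp (-(t₁ + δ)) • u
        rw [smul_zero, zero_add, smul_smul, hl, ← Real.exp_add]
        ring_nf
      · show (1 - l) * q₂ + l * t₁ = t₁ + δ
        rw [hq₂def]
        field_simp
        ring
    rwa [hpt] at hcombo
  -- now assemble
  refine ⟨Real.exp (-t₀), ⟨Real.exp_pos _, ?_, ?_, ?_⟩, ?_⟩
  · -- frontier
    have hlog : Real.log (1 / Real.exp (-t₀)) = t₀ := by
      rw [one_div, Real.exp_neg, inv_inv, Real.log_exp]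
    rw [hlog, hclosed.frontier_eq]
    refine ⟨ht₀S, fun hint => ?_⟩
    have hU : IsOpen (γ ⁻¹' interior Epi) := isOpen_interior.preimage hγc
    have ht₀U : t₀ ∈ γ ⁻¹' interior Epi := hint
    rcases Metric.isOpen_iff.1 hU t₀ ht₀U with ⟨r, hr, hball'⟩
    have hmem : t₀ - r/2 ∈ γ ⁻¹' interior Epi := by
      apply hball'
      simp only [Metric.mem_ball, Real.dist_eq]
      rw [abs_of_nonpos (by linarith)]
      linarith
    have hmem2 : γ (t₀ - r/2) ∈ Epi := interior_subset hmem
    have : t₀ - r/2 ∈ S := hmem2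
    have := csInf_le hSbdd this
    linarith
  · -- interior for s < s₀
    intro s hs hss
    have hlogs : Real.log (1 / s) = -Real.log s := by
      rw [one_div, Real.log_inv]
    have ht : t₀ < -Real.log s := by
      have h1 : Real.log s < Real.log (Real.exp (-t₀)) := Real.log_lt_log hs hss
      rw [Real.log_exp] at h1
      linarith
    have hsexp : s = Real.exp (-(-Real.log s)) := by
      rw [neg_neg, Real.exp_log hs]
    have := key t₀ ht₀S (-Real.log s - t₀) (by linarith)
    have heq : t₀ + (-Real.log s - t₀) = -Real.log s := by ring
    rw [heq] at this
    rw [hlogs]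
    have heq2 : γ (-Real.log s) = (s • u, -Real.log s) := by
      apply Prod.ext
      · show Real.exp (-(-Real.log s)) • u = s • u
        rw [neg_neg, Real.exp_log hs]
      · rfl
    rwa [heq2] at this
  · -- outside for s > s₀
    intro s hs hmem
    have hs0 : 0 < s := lt_trans (Real.exp_pos _) hs
    have hlogs : Real.log (1 / s) = -Real.log s := by
      rw [one_div, Real.log_inv]
    have ht : -Real.log s < t₀ := by
      have h1 : Real.log (Real.exp (-t₀)) < Real.log s := Real.log_lt_log (Real.exp_pos _) hs
      rw [Real.log_exp] at h1
      linarith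
    have hmem' : -Real.log s ∈ S := by
      show γ (-Real.log s) ∈ Epi
      have heq : γ (-Real.log s) = (s • u, Real.log (1 / s)) := by
        apply Prod.ext
        · show Real.exp (-(-Real.log s)) • u = s • u
          rw [neg_neg, Real.exp_log hs0]
        · exact hlogs.symm
      rw [heq]
      exact hmem
    have := csInf_le hSbdd hmem'
    linarith
  · -- uniqueness
    rintro s₁ ⟨hs₁pos, hfr₁, hint₁, hout₁⟩
    by_contra hne
    rcases lt_or_gt_of_ne hne with h | h
    · -- s₁ < s₀ : s₁'s "outside" condition contradicts γ(s₀) ∈ Epi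
      have h1 : (Real.exp (-t₀) • u, Real.log (1 / Real.exp (-t₀))) ∈ Epi := by
        have hlog : Real.log (1 / Real.exp (-t₀)) = t₀ := by
          rw [one_div, Real.exp_neg, inv_inv, Real.log_exp]
        rw [hlog]
        exact ht₀S
      exact hout₁ (Real.exp (-t₀)) h h1
    · -- s₀ < s₁ : γ(s₁) ∈ frontier ⊆ Epi, but our "outside" argument applies
      have h1 : (s₁ • u, Real.log (1 / s₁)) ∈ Epi := hclosed.frontier_subset hfr₁
      have ht : -Real.log s₁ < t₀ := by
        have h2 : Real.log (Real.exp (-t₀)) < Real.log s₁ := Real.log_lt_log (Real.exp_pos _) h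
        rw [Real.log_exp] at h2
        linarith
      have hmem' : -Real.log s₁ ∈ S := by
        show γ (-Real.log s₁) ∈ Epi
        have heq : γ (-Real.log s₁) = (s₁ • u, Real.log (1 / s₁)) := by
          apply Prod.ext
          · show Real.exp (-(-Real.log s₁)) • u = s₁ • u
            rw [neg_neg, Real.exp_log hs₁pos]
          · rw [one_div, Real.log_inv]
        rw [heq]
        exact h1
      have := csInf_le hSbdd hmem'
      linarith

end
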